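/- The cutfree sequent calculus LM→ is sound and complete with respect to minimal propositional logic: a purely implicational formula ρ is valid in minimal logic (i.e., has a tree-like NM→ proof) if and only if the sequent ⇒ ρ is provable in LM→ by a tree-like deduction. -/
import Mathlib


/-- Purely implicational formulas: built from propositional variables by `→`. -/
inductive Fml : Type
  | var : ℕ → Fml
  | imp : Fml → Fml → Fml
deriving DecidableEq

namespace Fml

/-- The weight of a formula: its total number of symbols. -/
def weight : Fml → ℕ
  | var _ => 1
  | imp a b => weight a + weight b + 1

/-- The (reflexive) subformula relation. -/
inductive Sub : Fml → Fml → Prop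
  | refl (φ : Fml) : Sub φ φ
  | impL {φ a b : Fml} : Sub φ a → Sub φ (imp a b)
  | impR {φ a b : Fml} : Sub φ b → Sub φ (imp a b)

/-- The antecedent of an implication (junk value on variables). -/
def antecedent : Fml → Fml
  | var n => var n
  | imp a _ => a

end Fml

/-- Tree-like natural deductions (with possible repetition nodes, i.e. NM→⁺-trees). -/
inductive DT : Type
  | leaf (φ : Fml)
  | impI (α β : Fml) (t : DT)
  | impE (α β : Fml) (t₁ t₂ : DT)
  | rep (φ : Fml) (ts : List DT)

namespace DT

/-- The formula labelling the root of a deduction tree. -/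
def label : DT → Fml
  | leaf φ => φ
  | impI α β _ => .imp α β
  | impE _ β _ _ => β
  | rep φ _ => φ

/-- Local correctness of a deduction tree w.r.t. the rules (→I), (→E), (R)ₙ (n ≥ 1). -/
inductive Correct : DT → Prop
  | leaf (φ : Fml) : Correct (leaf φ)
  | impI {α β : Fml} {t : DT} : t.label = β → Correct t → Correct (impI α β t)
  | impE {α β : Fml} {t₁ t₂ : DT} : t₁.label = α → t₂.label = .imp α β →
      Correct t₁ → Correct t₂ → Correct (impE α β t₁ t₂)
  | rep {φ : Fml} {ts : List DT} : ts ≠ [] → (∀ t ∈ ts, label t = φ) →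
      (∀ t ∈ ts, Correct t) → Correct (rep φ ts)

/-- A deduction lies in NM→ iff it uses no repetition rule. -/
inductive RepFree : DT → Prop
  | leaf (φ : Fml) : RepFree (leaf φ)
  | impI {α β : Fml} {t : DT} : RepFree t → RepFree (impI α β t)
  | impE {α β : Fml} {t₁ t₂ : DT} : RepFree t₁ → RepFree t₂ → RepFree (impE α β t₁ t₂)

/-- `ClosedUnder D t` : every deductive path of `t` from a leaf labelled `α` to the
root of `t` either contains the conclusion of an (→I)-inference discharging `α`, or
`α ∈ D` (the formulas discharged strictly below `t`).  With `D = ∅` this says that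
every deductive path of `t` is closed. -/
inductive ClosedUnder : Set Fml → DT → Prop
  | leaf {D : Set Fml} {φ : Fml} : φ ∈ D → ClosedUnder D (leaf φ)
  | impI {D : Set Fml} {α β : Fml} {t : DT} :
      ClosedUnder (insert α D) t → ClosedUnder D (impI α β t)
  | impE {D : Set Fml} {α β : Fml} {t₁ t₂ : DT} :
      ClosedUnder D t₁ → ClosedUnder D t₂ → ClosedUnder D (impE α β t₁ t₂)
  | rep {D : Set Fml} {φ : Fml} {ts : List DT} :
      (∀ t ∈ ts, ClosedUnder D t) → ClosedUnder D (rep φ ts)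

/-- The height of a deduction tree. -/
def height : DT → ℕ
  | leaf _ => 0
  | impI _ _ t => height t + 1
  | impE _ _ t₁ t₂ => max (height t₁) (height t₂) + 1
  | rep _ ts => (ts.attach.map fun t => height t.1).foldr max 0 + 1
decreasing_by
  all_goals simp_wf
  all_goals try have := List.sizeOf_lt_of_mem t.2
  all_goals omega

/-- The set of distinct formulas occurring in a deduction tree. -/
def formulas : DT → Finset Fml
  | leaf φ => {φ}
  | impI α β t => insert (.imp α β) (formulas t)
  | impE _ β t₁ t₂ => insert β (formulas t₁ ∪ formulas t₂)
  | rep φ ts => insert φ ((ts.attach.map fun t => formulas t.1).foldr (· ∪ ·) ∅)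
decreasing_by
  all_goals simp_wf
  all_goals try have := List.sizeOf_lt_of_mem t.2
  all_goals omega

/-- `φ(∂)`: the total weight of the set of distinct formulas occurring in `∂`. -/
def phi (t : DT) : ℕ := (t.formulas).sum Fml.weight

/-- The depths (= heights in the tree) of the leaves of a deduction tree. -/
def leafDepths : DT → List ℕ
  | leaf _ => [0]
  | impI _ _ t => (leafDepths t).map (· + 1)
  | impE _ _ t₁ t₂ => (leafDepths t₁ ++ leafDepths t₂).map (· + 1)
  | rep _ ts => ((ts.attach.map fun t => leafDepths t.1).flatten).map (· + 1)
decreasing_by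
  all_goals simp_wf
  all_goals try have := List.sizeOf_lt_of_mem t.2
  all_goals omega

/-- All leaves (top nodes) of the deduction have the same height. -/
def UniformLeaves (t : DT) : Prop := ∀ d ∈ t.leafDepths, d = t.height

/-- `t` is a tree-like NM→ proof of `ρ` : a locally correct, repetition-free tree
with conclusion `ρ`, all of whose deductive paths are closed. -/
def IsProofNM (t : DT) (ρ : Fml) : Prop :=
  t.RepFree ∧ t.Correct ∧ t.ClosedUnder ∅ ∧ t.label = ρ

/-- `t` is a tree-like NM→⁺ proof of `ρ`. -/
def IsProofNMPlus (t : DT) (ρ : Fml) : Prop :=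
  t.Correct ∧ t.ClosedUnder ∅ ∧ t.label = ρ

end DT

/-- `ρ` is valid in minimal logic iff it has a tree-like NM→ proof. -/
def MinValid (ρ : Fml) : Prop := ∃ t : DT, t.IsProofNM ρ

namespace Fml

/-- The set of propositional variables occurring in a formula. -/
def vars : Fml → Finset ℕ
  | var n => {n}
  | imp a b => a.vars ∪ b.vars

end Fml

/-- Tree-like deductions in Hudelmaier's cutfree sequent calculus LM→ for minimal
logic (sequents `Γ ⇒ α` with `Γ` a multiset of purely implicational formulas). -/
inductive LMT : Type
  | ax (Γ : Multiset Fml) (p : ℕ)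
  | i1 (Γ : Multiset Fml) (α β : Fml) (t : LMT)
  | i2 (Γ : Multiset Fml) (α β γ : Fml) (t : LMT)
  | eP (Γ : Multiset Fml) (p : ℕ) (γ : Fml) (q : ℕ) (t : LMT)
  | eE (Γ : Multiset Fml) (α β γ : Fml) (q : ℕ) (t₁ t₂ : LMT)

namespace LMT

/-- The antecedent of the end-sequent. -/
def ante : LMT → Multiset Fml
  | ax Γ p => (Fml.var p) ::ₘ Γ
  | i1 Γ _ _ _ => Γ
  | i2 Γ α β γ _ => (Fml.imp (.imp α β) γ) ::ₘ Γ
  | eP Γ p γ _ _ => (Fml.var p) ::ₘ (Fml.imp (.var p) γ) ::ₘ Γ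
  | eE Γ α β γ _ _ _ => (Fml.imp (.imp α β) γ) ::ₘ Γ

/-- The succedent of the end-sequent. -/
def succ : LMT → Fml
  | ax _ p => .var p
  | i1 _ α β _ => .imp α β
  | i2 _ α β _ _ => .imp α β
  | eP _ _ _ q _ => .var q
  | eE _ _ _ _ q _ _ => .var q

/-- `q ∈ VAR(Γ, γ)`. -/
def inVars (q : ℕ) (Γ : Multiset Fml) (γ : Fml) : Prop :=
  q ∈ γ.vars ∨ ∃ δ ∈ Γ, q ∈ δ.vars

/-- Local correctness of an LM→ deduction tree (rules (MA), (MI1→), (MI2→),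
(ME→P), (ME→→), with their side constraints). -/
inductive Correct : LMT → Prop
  | ax (Γ : Multiset Fml) (p : ℕ) : Correct (ax Γ p)
  | i1 {Γ : Multiset Fml} {α β : Fml} {t : LMT} :
      Correct t → t.ante = α ::ₘ Γ → t.succ = β →
      (∀ γ : Fml, Fml.imp (.imp α β) γ ∉ Γ) → Correct (i1 Γ α β t)
  | i2 {Γ : Multiset Fml} {α β γ : Fml} {t : LMT} :
      Correct t → t.ante = α ::ₘ (Fml.imp β γ) ::ₘ Γ → t.succ = β →
      Correct (i2 Γ α β γ t)
  | eP {Γ : Multiset Fml} {p : ℕ} {γ : Fml} {q : ℕ} {t : LMT} :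
      Correct t → t.ante = (Fml.var p) ::ₘ γ ::ₘ Γ → t.succ = .var q →
      inVars q Γ γ → p ≠ q → Correct (eP Γ p γ q t)
  | eE {Γ : Multiset Fml} {α β γ : Fml} {q : ℕ} {t₁ t₂ : LMT} :
      Correct t₁ → Correct t₂ →
      t₁.ante = α ::ₘ (Fml.imp β γ) ::ₘ Γ → t₁.succ = β →
      t₂.ante = γ ::ₘ Γ → t₂.succ = .var q →
      inVars q Γ γ → Correct (eE Γ α β γ q t₁ t₂)

/-- The height of an LM→ deduction tree. -/
def height : LMT → ℕ
  | ax _ _ => 0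
  | i1 _ _ _ t => t.height + 1
  | i2 _ _ _ _ t => t.height + 1
  | eP _ _ _ _ t => t.height + 1
  | eE _ _ _ _ _ t₁ t₂ => max t₁.height t₂.height + 1

/-- The set of distinct formulas occurring (in the sequents) of an LM→ deduction. -/
def formulas : LMT → Finset Fml
  | t@(ax _ _) => insert t.succ t.ante.toFinset
  | t@(i1 _ _ _ s) => insert t.succ t.ante.toFinset ∪ formulas s
  | t@(i2 _ _ _ _ s) => insert t.succ t.ante.toFinset ∪ formulas s
  | t@(eP _ _ _ _ s) => insert t.succ t.ante.toFinset ∪ formulas s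
  | t@(eE _ _ _ _ _ s₁ s₂) => insert t.succ t.ante.toFinset ∪ formulas s₁ ∪ formulas s₂

/-- The total weight of the set of distinct formulas occurring in an LM→ deduction. -/
def phi (t : LMT) : ℕ := (t.formulas).sum Fml.weight

end LMT

/-! ### Auxiliary development -/

section Aux

open Fml

/-- Standard natural-deduction provability for minimal implicational logic. -/
inductive Prov : Set Fml → Fml → Prop
  | hyp {Γ : Set Fml} {φ : Fml} : φ ∈ Γ → Prov Γ φ
  | intro {Γ : Set Fml} {α β : Fml} : Prov (insert α Γ) β → Prov Γ (Fml.imp α β)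
  | elim {Γ : Set Fml} {α β : Fml} : Prov Γ (Fml.imp α β) → Prov Γ α → Prov Γ β

theorem Prov.weaken {Γ Δ : Set Fml} {φ : Fml} (h : Prov Γ φ) (hs : Γ ⊆ Δ) : Prov Δ φ := by
  induction h generalizing Δ with
  | hyp hm => exact Prov.hyp (hs hm)
  | intro _ ih => exact Prov.intro (ih (Set.insert_subset_insert hs))
  | elim _ _ ih₁ ih₂ => exact Prov.elim (ih₁ hs) (ih₂ hs)

theorem Prov.cut' {Δ : Set Fml} {φ : Fml} (h : Prov Δ φ) :
    ∀ {δ : Fml} {Γ : Set Fml}, Δ ⊆ insert δ Γ → Prov Γ δ → Prov Γ φ := by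
  induction h with
  | hyp hm =>
    intro δ Γ hs hδ
    rcases hs hm with h | h
    · exact h ▸ hδ
    · exact Prov.hyp h
  | @intro _ α β _ ih =>
    intro δ Γ hs hδ
    refine Prov.intro (ih (δ := δ) ?_ (hδ.weaken (Set.subset_insert _ _)))
    intro x hx
    rcases hx with rfl | hx
    · exact Or.inr (Set.mem_insert _ _)
    · rcases hs hx with h | h
      · exact Or.inl h
      · exact Or.inr (Set.mem_insert_of_mem _ h)
  | elim _ _ ih₁ ih₂ =>
    intro δ Γ hs hδ
    exact Prov.elim (ih₁ hs hδ) (ih₂ hs hδ)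

theorem Prov.cut {Γ : Set Fml} {δ φ : Fml} (h₁ : Prov Γ δ) (h₂ : Prov (insert δ Γ) φ) :
    Prov Γ φ :=
  h₂.cut' subset_rfl h₁

/-- From `(α→β)→γ` one can prove `β→γ`. -/
theorem Prov.bg {Γ : Set Fml} {α β γ : Fml}
    (h : Fml.imp (.imp α β) γ ∈ Γ) : Prov Γ (Fml.imp β γ) := by
  refine Prov.intro (Prov.elim (Prov.hyp (Set.mem_insert_of_mem _ h)) ?_)
  exact Prov.intro (Prov.hyp (Set.mem_insert_of_mem _ (Set.mem_insert _ _)))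

/-! #### NM→ trees vs `Prov` -/

theorem dt_to_prov {t : DT} (hr : t.RepFree) :
    t.Correct → ∀ D : Set Fml, t.ClosedUnder D → Prov D t.label := by
  induction hr with
  | leaf φ =>
    intro _ D hc
    cases hc with
    | leaf h => exact Prov.hyp h
  | @impI α β t _ ih =>
    intro hcor D hc
    cases hcor with
    | impI hl hct =>
      cases hc with
      | impI hcl => exact Prov.intro (hl ▸ ih hct _ hcl)
  | @impE α β t₁ t₂ _ _ ih₁ ih₂ =>
    intro hcor D hc
    cases hcor with
    | impE hl₁ hl₂ hc₁ hc₂ =>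
      cases hc with
      | impE hcl₁ hcl₂ =>
        exact Prov.elim (hl₂ ▸ ih₂ hc₂ _ hcl₂) (hl₁ ▸ ih₁ hc₁ _ hcl₁)

theorem prov_to_dt {Γ : Set Fml} {φ : Fml} (h : Prov Γ φ) :
    ∃ t : DT, t.RepFree ∧ t.Correct ∧ t.ClosedUnder Γ ∧ t.label = φ := by
  induction h with
  | @hyp _ φ hm =>
    exact ⟨DT.leaf φ, DT.RepFree.leaf φ, DT.Correct.leaf φ, DT.ClosedUnder.leaf hm, rfl⟩
  | @intro _ α β _ ih =>
    obtain ⟨t, hr, hc, hcl, hl⟩ := ih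
    exact ⟨DT.impI α β t, DT.RepFree.impI hr, DT.Correct.impI hl hc,
      DT.ClosedUnder.impI hcl, rfl⟩
  | @elim _ α β _ _ ih₁ ih₂ =>
    obtain ⟨t₂, hr₂, hc₂, hcl₂, hl₂⟩ := ih₁
    obtain ⟨t₁, hr₁, hc₁, hcl₁, hl₁⟩ := ih₂
    exact ⟨DT.impE α β t₁ t₂, DT.RepFree.impE hr₁ hr₂, DT.Correct.impE hl₁ hl₂ hc₁ hc₂,
      DT.ClosedUnder.impE hcl₁ hcl₂, rfl⟩

theorem minValid_iff_prov (ρ : Fml) : MinValid ρ ↔ Prov ∅ ρ := by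
  constructor
  · rintro ⟨t, hr, hc, hcl, hl⟩
    exact hl ▸ dt_to_prov hr hc ∅ hcl
  · intro h
    obtain ⟨t, hr, hc, hcl, hl⟩ := prov_to_dt h
    exact ⟨t, hr, hc, hcl, hl⟩

/-! #### Soundness of LM→ w.r.t. `Prov` -/

/-- The set of formulas of a multiset. -/
def mset (Γ : Multiset Fml) : Set Fml := {δ | δ ∈ Γ}

theorem mset_cons (α : Fml) (Γ : Multiset Fml) : mset (α ::ₘ Γ) = insert α (mset Γ) := by
  ext x; simp [mset]

theorem lmt_to_prov {t : LMT} (h : t.Correct) : Prov (mset t.ante) t.succ := by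
  induction h with
  | ax Γ p =>
    show Prov (mset (Fml.var p ::ₘ Γ)) (Fml.var p)
    rw [mset_cons]
    exact Prov.hyp (Set.mem_insert _ _)
  | @i1 Γ α β t _ ha hs _ ih =>
    rw [ha, mset_cons] at ih
    exact Prov.intro (hs ▸ ih)
  | @i2 Γ α β γ t _ ha hs ih =>
    rw [ha, mset_cons, mset_cons] at ih
    show Prov (mset (Fml.imp (.imp α β) γ ::ₘ Γ)) (Fml.imp α β)
    rw [mset_cons]
    set Γ₀ := insert (Fml.imp (.imp α β) γ) (mset Γ) with hΓ₀
    have hbg : Prov Γ₀ (Fml.imp β γ) := Prov.bg (Set.mem_insert _ _)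
    refine Prov.intro (Prov.cut (hbg.weaken (Set.subset_insert _ _)) ?_)
    refine (hs ▸ ih).weaken ?_
    intro x hx
    rcases hx with rfl | hx
    · exact Or.inr (Set.mem_insert _ _)
    · rcases hx with rfl | hx
      · exact Set.mem_insert _ _
      · exact Or.inr (Or.inr (Set.mem_insert_of_mem _ hx))
  | @eP Γ p γ q t _ ha hs _ _ ih =>
    rw [ha, mset_cons, mset_cons] at ih
    show Prov (mset (Fml.var p ::ₘ Fml.imp (.var p) γ ::ₘ Γ)) (Fml.var q)
    rw [mset_cons, mset_cons]
    set Γ₀ := insert (Fml.var p) (insert (Fml.imp (.var p) γ) (mset Γ)) with hΓ₀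
    have hγ : Prov Γ₀ γ :=
      Prov.elim (Prov.hyp (Or.inr (Set.mem_insert _ _))) (Prov.hyp (Set.mem_insert _ _))
    refine Prov.cut hγ ((hs ▸ ih).weaken ?_)
    intro x hx
    rcases hx with rfl | hx
    · exact Or.inr (Set.mem_insert _ _)
    · rcases hx with rfl | hx
      · exact Set.mem_insert _ _
      · exact Or.inr (Or.inr (Or.inr hx))
  | @eE Γ α β γ q t₁ t₂ _ _ ha₁ hs₁ ha₂ hs₂ _ ih₁ ih₂ =>
    rw [ha₁, mset_cons, mset_cons] at ih₁
    rw [ha₂, mset_cons] at ih₂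
    show Prov (mset (Fml.imp (.imp α β) γ ::ₘ Γ)) (Fml.var q)
    rw [mset_cons]
    set Γ₀ := insert (Fml.imp (.imp α β) γ) (mset Γ) with hΓ₀
    have hbg : Prov Γ₀ (Fml.imp β γ) := Prov.bg (Set.mem_insert _ _)
    have hab : Prov Γ₀ (Fml.imp α β) := by
      refine Prov.intro (Prov.cut (hbg.weaken (Set.subset_insert _ _)) ?_)
      refine (hs₁ ▸ ih₁).weaken ?_
      intro x hx
      rcases hx with rfl | hx
      · exact Or.inr (Set.mem_insert _ _)
      · rcases hx with rfl | hx
        · exact Set.mem_insert _ _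
        · exact Or.inr (Or.inr (Set.mem_insert_of_mem _ hx))
    have hγ : Prov Γ₀ γ := Prov.elim (Prov.hyp (Set.mem_insert _ _)) hab
    refine Prov.cut hγ ((hs₂ ▸ ih₂).weaken ?_)
    intro x hx
    rcases hx with rfl | hx
    · exact Set.mem_insert _ _
    · exact Or.inr (Set.mem_insert_of_mem _ hx)


/-! #### Kripke semantics -/

structure KM where
  W : Type
  le : W → W → Prop
  refl : ∀ w, le w w
  trans : ∀ {u v w}, le u v → le v w → le u w
  V : W → ℕ → Prop
  mono : ∀ {u v : W} {n : ℕ}, le u v → V u n → V v n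

def KM.force (M : KM) : Fml → M.W → Prop
  | .var n, w => M.V w n
  | .imp a b, w => ∀ v, M.le w v → M.force a v → M.force b v

theorem KM.force_mono (M : KM) {φ : Fml} {u v : M.W} (h : M.le u v) (hf : M.force φ u) :
    M.force φ v := by
  cases φ with
  | var n => exact M.mono h hf
  | imp a b => exact fun x hx ha => hf x (M.trans h hx) ha

theorem prov_sound {Γ : Set Fml} {φ : Fml} (h : Prov Γ φ) (M : KM) :
    ∀ w : M.W, (∀ δ ∈ Γ, M.force δ w) → M.force φ w := by
  induction h with
  | hyp hm => exact fun w hw => hw _ hm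
  | @intro _ α β _ ih =>
    intro w hw v hv ha
    refine ih v ?_
    intro δ hδ
    rcases hδ with rfl | hδ
    · exact ha
    · exact M.force_mono hv (hw δ hδ)
  | elim _ _ ih₁ ih₂ =>
    exact fun w hw => ih₁ w hw w (M.refl w) (ih₂ w hw)

/-- Derivability in LM→. -/
def Der (Γ : Multiset Fml) (φ : Fml) : Prop :=
  ∃ t : LMT, t.Correct ∧ t.ante = Γ ∧ t.succ = φ

/-- A rooted Kripke countermodel for the sequent `Γ ⇒ φ`. -/
def Refutes (Γ : Multiset Fml) (φ : Fml) : Prop :=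
  ∃ (M : KM) (w : M.W), (∀ v, M.le w v) ∧ (∀ δ ∈ Γ, M.force δ w) ∧ ¬ M.force φ w

/-- The termination measure on formulas. -/
def mu : Fml → ℕ
  | .var _ => 1
  | .imp a b => mu a + 2 * mu b

theorem one_le_mu (φ : Fml) : 1 ≤ mu φ := by
  cases φ with
  | var n => exact le_rfl
  | imp a b => have := one_le_mu b; simp [mu]; omega

def muM (Γ : Multiset Fml) : ℕ := (Γ.map mu).sum

theorem muM_cons (α : Fml) (Γ : Multiset Fml) : muM (α ::ₘ Γ) = mu α + muM Γ := by
  simp [muM]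

/-- A correct LM→ derivation with atomic succedent has that variable in the antecedent. -/
theorem succ_var_mem {t : LMT} (h : t.Correct) :
    ∀ {q : ℕ}, t.succ = .var q → ∃ δ ∈ t.ante, q ∈ δ.vars := by
  cases h with
  | ax Γ p =>
    intro q hq
    injection hq with hq
    exact ⟨Fml.var p, Multiset.mem_cons_self _ _, by simp [Fml.vars, hq]⟩
  | i1 _ _ _ _ => exact fun hq => Fml.noConfusion hq
  | i2 _ _ _ => exact fun hq => Fml.noConfusion hq
  | @eP Γ p γ q' t _ _ _ hv _ =>
    intro q hq
    injection hq with hq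
    subst hq
    rcases hv with h | ⟨δ, hδ, hδv⟩
    · exact ⟨Fml.imp (.var p) γ, Multiset.mem_cons_of_mem (Multiset.mem_cons_self _ _),
        by simp [Fml.vars]; exact Or.inr h⟩
    · exact ⟨δ, Multiset.mem_cons_of_mem (Multiset.mem_cons_of_mem hδ), hδv⟩
  | @eE Γ α β γ q' t₁ t₂ _ _ _ _ _ _ hv =>
    intro q hq
    injection hq with hq
    subst hq
    rcases hv with h | ⟨δ, hδ, hδv⟩
    · exact ⟨Fml.imp (.imp α β) γ, Multiset.mem_cons_self _ _,
        by simp [Fml.vars]; exact Or.inr (Or.inr h)⟩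
    · exact ⟨δ, Multiset.mem_cons_of_mem hδ, hδv⟩

/-- The one-world model making everything not containing `q` true. -/
def trivKM (q : ℕ) : KM where
  W := Unit
  le _ _ := True
  refl _ := trivial
  trans _ _ := trivial
  V _ n := n ≠ q
  mono _ h := h

theorem trivKM_force {q : ℕ} {δ : Fml} (h : q ∉ δ.vars) (w : Unit) :
    (trivKM q).force δ w := by
  induction δ generalizing w with
  | var n =>
    simp [Fml.vars] at h
    exact fun hn => h hn.symm
  | imp a b iha ihb =>
    intro v _ _
    simp [Fml.vars] at h
    exact ihb h.2 v


/-! #### Gluing a family of rooted models below a fresh root -/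

section Glue

variable {ι : Type} (M : ι → KM) (w : ∀ i, (M i).W)
  (hroot : ∀ i v, (M i).le (w i) v) (P : ℕ → Prop)
  (hP : ∀ n i, P n → (M i).V (w i) n)

def glueLe : Option ((i : ι) × (M i).W) → Option ((i : ι) × (M i).W) → Prop
  | none, _ => True
  | some _, none => False
  | some ⟨i, u⟩, some ⟨j, v⟩ => ∃ h : j = i, (M i).le u (h ▸ v)

def glue : KM where
  W := Option ((i : ι) × (M i).W)
  le := glueLe M
  refl x := by
    cases x with
    | none => trivial
    | some p => exact ⟨rfl, (M p.1).refl p.2⟩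
  trans := by
    intro x y z hxy hyz
    cases x with
    | none => trivial
    | some p =>
      cases y with
      | none => exact absurd hxy (by cases p; exact id)
      | some r =>
        cases z with
        | none => exact absurd hyz (by cases r; exact id)
        | some s =>
          cases p with | mk i u =>
          cases r with | mk j v =>
          cases s with | mk k t =>
          obtain ⟨rfl, h₁⟩ := hxy
          obtain ⟨rfl, h₂⟩ := hyz
          exact ⟨rfl, KM.trans _ h₁ h₂⟩
  V x n := match x with
    | none => P n
    | some ⟨i, u⟩ => (M i).V u n
  mono := by
    intro x y n hxy hx
    cases x with
    | none =>
      cases y with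
      | none => exact hx
      | some p =>
        cases p with | mk i u =>
        exact (M i).mono (hroot i u) (hP n i hx)
    | some p =>
      cases y with
      | none => exact absurd hxy (by cases p; exact id)
      | some r =>
        cases p with | mk i u =>
        cases r with | mk j v =>
        obtain ⟨rfl, h⟩ := hxy
        exact KM.mono _ h hx

theorem glue_root : ∀ v, (glue M w hroot P hP).le none v := by
  intro v
  cases v <;> trivial

theorem glue_force_some (φ : Fml) :
    ∀ (i : ι) (u : (M i).W),
      ((glue M w hroot P hP).force φ (some ⟨i, u⟩) ↔ (M i).force φ u) := by
  induction φ with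
  | var n => exact fun i u => Iff.rfl
  | imp a b iha ihb =>
    intro i u
    constructor
    · intro hf v hv ha
      exact (ihb i v).mp (hf (some ⟨i, v⟩) ⟨rfl, hv⟩ ((iha i v).mpr ha))
    · intro hf y hy ha
      cases y with
      | none => exact absurd hy (by exact id)
      | some r =>
        cases r with | mk j v =>
        obtain ⟨rfl, hle⟩ := hy
        exact (ihb _ v).mpr (hf v hle ((iha _ v).mp ha))

end Glue


/-! #### The decision lemma: every sequent is derivable or refutable -/

theorem decide_seq (n : ℕ) : ∀ Γ φ, muM Γ + mu φ ≤ n → Der Γ φ ∨ Refutes Γ φ := by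
  induction n using Nat.strong_induction_on with
  | _ n IH =>
  intro Γ φ hn
  cases φ with
  | imp α β =>
    by_cases hγ : ∃ γ, Fml.imp (.imp α β) γ ∈ Γ
    · obtain ⟨γ, hγm⟩ := hγ
      have hΓ : Fml.imp (.imp α β) γ ::ₘ Γ.erase (Fml.imp (.imp α β) γ) = Γ :=
        Multiset.cons_erase hγm
      have hmeas : muM (α ::ₘ Fml.imp β γ ::ₘ Γ.erase (Fml.imp (.imp α β) γ)) + mu β < n := by
        rw [← hΓ] at hn
        have h1 := one_le_mu α
        have h2 := one_le_mu β
        simp only [muM_cons, mu] at hn ⊢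
        omega
      rcases IH _ hmeas _ _ le_rfl with ⟨t, hc, ha, hs⟩ | hR
      · exact Or.inl ⟨LMT.i2 _ α β γ t, LMT.Correct.i2 hc ha hs, hΓ, rfl⟩
      · obtain ⟨M, w, hr, hf, hnb⟩ := hR
        refine Or.inr ⟨M, w, hr, ?_, ?_⟩
        · intro δ hδ
          rw [← hΓ] at hδ
          rcases Multiset.mem_cons.mp hδ with rfl | hδ
          · intro v hv hab
            have hβγ : M.force (Fml.imp β γ) v :=
              M.force_mono hv (hf _ (Multiset.mem_cons_of_mem (Multiset.mem_cons_self _ _)))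
            have hav : M.force α v := M.force_mono hv (hf α (Multiset.mem_cons_self _ _))
            exact hβγ v (M.refl v) (hab v (M.refl v) hav)
          · exact hf δ (Multiset.mem_cons_of_mem (Multiset.mem_cons_of_mem hδ))
        · intro h
          exact hnb (h w (M.refl w) (hf α (Multiset.mem_cons_self _ _)))
    · have hmeas : muM (α ::ₘ Γ) + mu β < n := by
        have h2 := one_le_mu β
        simp only [muM_cons, mu] at hn ⊢
        omega
      rcases IH _ hmeas _ _ le_rfl with ⟨t, hc, ha, hs⟩ | hR
      · exact Or.inl ⟨LMT.i1 Γ α β t,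
          LMT.Correct.i1 hc ha hs (fun γ h => hγ ⟨γ, h⟩), rfl, rfl⟩
      · obtain ⟨M, w, hr, hf, hnb⟩ := hR
        refine Or.inr ⟨M, w, hr, fun δ hδ => hf δ (Multiset.mem_cons_of_mem hδ), ?_⟩
        intro h
        exact hnb (h w (M.refl w) (hf α (Multiset.mem_cons_self _ _)))
  | var q =>
    by_cases h1 : Fml.var q ∈ Γ
    · exact Or.inl ⟨LMT.ax (Γ.erase (Fml.var q)) q, LMT.Correct.ax _ _,
        Multiset.cons_erase h1, rfl⟩
    by_cases h2 : ∀ δ ∈ Γ, q ∉ δ.vars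
    · exact Or.inr ⟨trivKM q, (), fun _ => trivial, fun δ hδ => trivKM_force (h2 δ hδ) _,
        fun h => h rfl⟩
    push_neg at h2
    obtain ⟨δ₀, hδ₀, hqδ₀⟩ := h2
    by_cases h3 : ∃ p γ, Fml.var p ∈ Γ ∧ Fml.imp (.var p) γ ∈ Γ
    · obtain ⟨p, γ, hp, hpγ⟩ := h3
      have hpq : p ≠ q := fun h => h1 (h ▸ hp)
      have hpγ' : Fml.imp (.var p) γ ∈ Γ.erase (Fml.var p) :=
        (Multiset.mem_erase_of_ne (by simp)).mpr hpγ
      have hΓ : Fml.var p ::ₘ Fml.imp (.var p) γ ::ₘ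
          (Γ.erase (Fml.var p)).erase (Fml.imp (.var p) γ) = Γ := by
        rw [Multiset.cons_erase hpγ', Multiset.cons_erase hp]
      have hmeas : muM (Fml.var p ::ₘ γ ::ₘ (Γ.erase (Fml.var p)).erase (Fml.imp (.var p) γ))
          + mu (Fml.var q) < n := by
        rw [← hΓ] at hn
        simp only [muM_cons, mu] at hn ⊢
        omega
      have hInv : LMT.inVars q ((Γ.erase (Fml.var p)).erase (Fml.imp (.var p) γ)) γ := by
        rw [← hΓ] at hδ₀
        rcases Multiset.mem_cons.mp hδ₀ with rfl | hδ₀'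
        · simp [Fml.vars] at hqδ₀
          exact absurd hqδ₀.symm hpq
        rcases Multiset.mem_cons.mp hδ₀' with rfl | hδ₀''
        · simp [Fml.vars] at hqδ₀
          rcases hqδ₀ with h | h
          · exact absurd h.symm hpq
          · exact Or.inl h
        · exact Or.inr ⟨δ₀, hδ₀'', hqδ₀⟩
      rcases IH _ hmeas _ _ le_rfl with ⟨t, hc, ha, hs⟩ | hR
      · exact Or.inl ⟨LMT.eP _ p γ q t, LMT.Correct.eP hc ha hs hInv hpq, hΓ, rfl⟩
      · obtain ⟨M, w, hr, hf, hnq⟩ := hR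
        refine Or.inr ⟨M, w, hr, ?_, hnq⟩
        intro δ hδ
        rw [← hΓ] at hδ
        rcases Multiset.mem_cons.mp hδ with rfl | hδ'
        · exact hf _ (Multiset.mem_cons_self _ _)
        rcases Multiset.mem_cons.mp hδ' with rfl | hδ''
        · intro v hv _
          exact M.force_mono hv (hf γ (Multiset.mem_cons_of_mem (Multiset.mem_cons_self _ _)))
        · exact hf δ (Multiset.mem_cons_of_mem (Multiset.mem_cons_of_mem hδ''))
    · -- saturation phase: only left rule available is (ME→→)
      have hmeas1 : ∀ a b g, Fml.imp (.imp a b) g ∈ Γ →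
          muM (a ::ₘ Fml.imp b g ::ₘ Γ.erase (Fml.imp (.imp a b) g)) + mu b < n := by
        intro a b g hm
        rw [← Multiset.cons_erase hm] at hn
        have h4 := one_le_mu a
        have h5 := one_le_mu b
        have h6 := one_le_mu g
        simp only [muM_cons, mu] at hn ⊢
        omega
      have hmeas2 : ∀ a b g, Fml.imp (.imp a b) g ∈ Γ →
          muM (g ::ₘ Γ.erase (Fml.imp (.imp a b) g)) + mu (Fml.var q) < n := by
        intro a b g hm
        rw [← Multiset.cons_erase hm] at hn
        have h4 := one_le_mu a
        have h5 := one_le_mu b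
        have h6 := one_le_mu g
        simp only [muM_cons, mu] at hn ⊢
        omega
      by_cases h4 : ∃ a b g, ∃ _ : Fml.imp (.imp a b) g ∈ Γ,
          Der (a ::ₘ Fml.imp b g ::ₘ Γ.erase (Fml.imp (.imp a b) g)) b ∧
          Der (g ::ₘ Γ.erase (Fml.imp (.imp a b) g)) (Fml.var q)
      · obtain ⟨a, b, g, hm, ⟨t₁, hc₁, ha₁, hs₁⟩, ⟨t₂, hc₂, ha₂, hs₂⟩⟩ := h4
        have hInv : LMT.inVars q (Γ.erase (Fml.imp (.imp a b) g)) g := by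
          obtain ⟨δ, hδ, hqδ⟩ := succ_var_mem hc₂ hs₂
          rw [ha₂] at hδ
          rcases Multiset.mem_cons.mp hδ with rfl | hδ'
          · exact Or.inl hqδ
          · exact Or.inr ⟨δ, hδ', hqδ⟩
        exact Or.inl ⟨LMT.eE _ a b g q t₁ t₂,
          LMT.Correct.eE hc₁ hc₂ ha₁ hs₁ ha₂ hs₂ hInv, Multiset.cons_erase hm, rfl⟩
      by_cases h5 : ∃ a b g, ∃ _ : Fml.imp (.imp a b) g ∈ Γ,
          Refutes (g ::ₘ Γ.erase (Fml.imp (.imp a b) g)) (Fml.var q)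
      · obtain ⟨a, b, g, hm, M, w, hr, hf, hnq⟩ := h5
        refine Or.inr ⟨M, w, hr, ?_, hnq⟩
        intro δ hδ
        by_cases hδθ : δ = Fml.imp (.imp a b) g
        · subst hδθ
          intro v hv _
          exact M.force_mono hv (hf g (Multiset.mem_cons_self _ _))
        · exact hf δ (Multiset.mem_cons_of_mem ((Multiset.mem_erase_of_ne hδθ).mpr hδ))
      -- all second premises derivable, all first premises refutable: glue countermodels
      have hcomp : ∀ a b g, Fml.imp (.imp a b) g ∈ Γ →
          Refutes (a ::ₘ Fml.imp b g ::ₘ Γ.erase (Fml.imp (.imp a b) g)) b := by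
        intro a b g hm
        have hd2 : Der (g ::ₘ Γ.erase (Fml.imp (.imp a b) g)) (Fml.var q) := by
          rcases IH _ (hmeas2 a b g hm) _ _ le_rfl with h | h
          · exact h
          · exact absurd ⟨a, b, g, hm, h⟩ h5
        rcases IH _ (hmeas1 a b g hm) _ _ le_rfl with h | h
        · exact absurd ⟨a, b, g, hm, h, hd2⟩ h4
        · exact h
      classical
      have hch : ∀ i : {x : Fml × Fml × Fml // Fml.imp (.imp x.1 x.2.1) x.2.2 ∈ Γ},
          Refutes (i.1.1 ::ₘ Fml.imp i.1.2.1 i.1.2.2 ::ₘ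
            Γ.erase (Fml.imp (.imp i.1.1 i.1.2.1) i.1.2.2)) i.1.2.1 :=
        fun i => hcomp i.1.1 i.1.2.1 i.1.2.2 i.2
      choose M w hr hf hnb using hch
      have hP : ∀ (m : ℕ) i, Fml.var m ∈ Γ → (M i).V (w i) m := by
        intro m i hm
        have hm' : Fml.var m ∈ Γ.erase (Fml.imp (.imp i.1.1 i.1.2.1) i.1.2.2) :=
          (Multiset.mem_erase_of_ne (by simp)).mpr hm
        exact hf i (Fml.var m) (Multiset.mem_cons_of_mem (Multiset.mem_cons_of_mem hm'))
      have hθforce : ∀ i, (M i).force (Fml.imp (.imp i.1.1 i.1.2.1) i.1.2.2) (w i) := by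
        intro i v hv hab
        have hβγ : (M i).force (Fml.imp i.1.2.1 i.1.2.2) v :=
          (M i).force_mono hv (hf i _ (Multiset.mem_cons_of_mem (Multiset.mem_cons_self _ _)))
        have hav : (M i).force i.1.1 v :=
          (M i).force_mono hv (hf i _ (Multiset.mem_cons_self _ _))
        exact hβγ v ((M i).refl v) (hab v ((M i).refl v) hav)
      have hcompAll : ∀ δ ∈ Γ, ∀ i, (M i).force δ (w i) := by
        intro δ hδ i
        by_cases hδθ : δ = Fml.imp (.imp i.1.1 i.1.2.1) i.1.2.2
        · exact hδθ ▸ hθforce i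
        · exact hf i δ (Multiset.mem_cons_of_mem (Multiset.mem_cons_of_mem
            ((Multiset.mem_erase_of_ne hδθ).mpr hδ)))
      refine Or.inr ⟨glue M w hr (fun m => Fml.var m ∈ Γ) hP, none,
        glue_root M w hr _ hP, ?_, fun h => h1 h⟩
      intro δ hδ
      cases δ with
      | var m => exact hδ
      | imp a b =>
        intro v hv ha
        cases v with
        | some r =>
          obtain ⟨i, u⟩ := r
          rw [glue_force_some] at ha ⊢
          have hAll : (M i).force (Fml.imp a b) u :=
            (M i).force_mono (hr i u) (hcompAll _ hδ i)
          exact hAll u ((M i).refl u) ha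
        | none =>
          cases a with
          | var p => exact absurd ⟨p, b, ha, hδ⟩ h3
          | imp a' b' =>
            exfalso
            have hm : Fml.imp (.imp a' b') b ∈ Γ := hδ
            have h₂ : (glue M w hr (fun m => Fml.var m ∈ Γ) hP).force a'
                (some ⟨⟨(a', b', b), hm⟩, w ⟨(a', b', b), hm⟩⟩) :=
              (glue_force_some M w hr _ hP a' _ _).mpr
                (hf ⟨(a', b', b), hm⟩ a' (Multiset.mem_cons_self _ _))
            have h₃ := ha (some ⟨⟨(a', b', b), hm⟩, w ⟨(a', b', b), hm⟩⟩)
              (glue_root M w hr _ hP _) h₂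
            exact hnb ⟨(a', b', b), hm⟩
              ((glue_force_some M w hr _ hP b' _ _).mp h₃)

end Aux

/-- The cutfree sequent calculus LM→ is sound and complete with respect to minimal
propositional logic: a purely implicational formula `ρ` is valid in minimal logic
(i.e. has a tree-like NM→ proof) if and only if the sequent `⇒ ρ` is provable in
LM→ by a tree-like deduction. -/
theorem LM_sound_complete (ρ : Fml) :
    MinValid ρ ↔ ∃ t : LMT, t.Correct ∧ t.ante = 0 ∧ t.succ = ρ := by
  rw [minValid_iff_prov]
  constructor
  · intro h
    rcases decide_seq (muM 0 + mu ρ) 0 ρ le_rfl with hD | ⟨M, w, _, _, hnρ⟩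
    · exact hD
    · exact absurd (prov_sound h M w (fun δ hδ => absurd hδ (Set.notMem_empty δ))) hnρ
  · rintro ⟨t, hc, ha, hs⟩
    have hP := lmt_to_prov hc
    rw [ha, hs] at hP
    have he : mset 0 = (∅ : Set Fml) := by ext x; simp [mset]
    rwa [he] at hP
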